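/- A 2×2 row-stochastic matrix with strictly positive entries is embeddable (i.e., equals exp(Q) for some real 2×2 matrix Q with nonnegative off-diagonal entries and zero row sums) if and only if its determinant is positive. -/

import Mathlib

open NormedSpace
open scoped Nat
set_option maxHeartbeats 1000000

attribute [local instance] Matrix.linftyOpNormedAddCommGroup Matrix.linftyOpNormedRing
  Matrix.linftyOpNormedAlgebra

lemma exp_smul_idem {𝔸 : Type*} [NormedRing 𝔸] [NormedAlgebra ℝ 𝔸] [CompleteSpace 𝔸]
    (e : 𝔸) (he : e * e = e) (c : ℝ) :
    exp (c • e) = 1 + (Real.exp c - 1) • e := by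
  have hpow : ∀ n : ℕ, e ^ (n + 1) = e := by
    intro n
    induction n with
    | zero => simp
    | succ n ih => rw [pow_succ, ih, he]
  have hsum : Summable fun n : ℕ => (n !⁻¹ : ℝ) • (c • e) ^ n := expSeries_summable' (c • e)
  have hsumR : Summable fun n : ℕ => (n !⁻¹ : ℝ) • c ^ n := expSeries_summable' (𝕂 := ℝ) c
  have hsumR' : Summable fun n : ℕ => ((n + 1)!⁻¹ : ℝ) • c ^ (n + 1) :=
    (summable_nat_add_iff 1).2 hsumR
  have hre : Real.exp c = ∑' n : ℕ, (n !⁻¹ : ℝ) • c ^ n := by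
    rw [Real.exp_eq_exp_ℝ, exp_eq_tsum ℝ]
  rw [Summable.tsum_eq_zero_add hsumR] at hre
  simp only [pow_zero, Nat.factorial_zero, Nat.cast_one, inv_one, smul_eq_mul, mul_one] at hre
  rw [exp_eq_tsum ℝ]
  beta_reduce
  rw [Summable.tsum_eq_zero_add hsum]
  have h1 : ∀ n : ℕ, ((n + 1)!⁻¹ : ℝ) • (c • e) ^ (n + 1)
      = (((n + 1)!⁻¹ : ℝ) • c ^ (n + 1)) • e := by
    intro n
    rw [smul_pow, hpow, smul_smul, smul_eq_mul]
  simp only [h1, pow_zero, Nat.factorial_zero, Nat.cast_one, inv_one, one_smul]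
  rw [Summable.tsum_smul_const hsumR']
  congr 1
  have : (∑' n : ℕ, ((n + 1)!⁻¹ : ℝ) • c ^ (n + 1)) = Real.exp c - 1 := by
    simp only [smul_eq_mul] at hre ⊢
    linarith
  rw [this]

private def Nmat (a b : ℝ) : Matrix (Fin 2) (Fin 2) ℝ := !![-a, a; b, -b]

lemma Nmat_mul (a b : ℝ) : Nmat a b * Nmat a b = (-(a + b)) • Nmat a b := by
  ext i j
  fin_cases i <;> fin_cases j <;>
    simp [Nmat, Matrix.mul_apply, Fin.sum_univ_two] <;> ring

lemma exp_Nmat (a b t : ℝ) (hs : a + b ≠ 0) :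
    exp (t • Nmat a b) = 1 + ((1 - Real.exp (-(t * (a + b)))) / (a + b)) • Nmat a b := by
  set s := a + b with hsdef
  have he : ((-s⁻¹) • Nmat a b) * ((-s⁻¹) • Nmat a b) = (-s⁻¹) • Nmat a b := by
    rw [smul_mul_smul_comm, Nmat_mul, smul_smul]
    congr 1
    rw [hsdef]
    field_simp
  have hQ : t • Nmat a b = (-(t * s)) • ((-s⁻¹) • Nmat a b) := by
    rw [smul_smul]
    congr 1
    field_simp
  rw [hQ]
  erw [exp_smul_idem _ he]
  rw [smul_smul]
  congr 1
  field_simp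
  congr 1
  ring

/-- A 2×2 row-stochastic matrix with strictly positive entries is embeddable
(equals `exp Q` for a Markov generator `Q`) iff its determinant is positive. -/
theorem stmt_1 (P : Matrix (Fin 2) (Fin 2) ℝ)
    (hpos : ∀ i j, 0 < P i j) (hrow : ∀ i, ∑ j, P i j = 1) :
    (∃ Q : Matrix (Fin 2) (Fin 2) ℝ,
        (∀ i j, i ≠ j → 0 ≤ Q i j) ∧ (∀ i, ∑ j, Q i j = 0) ∧
        NormedSpace.exp Q = P) ↔ 0 < P.det := by
  constructor
  · rintro ⟨Q, hoff, hrowQ, hexp⟩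
    set a := Q 0 1 with hadef
    set b := Q 1 0 with hbdef
    have ha : 0 ≤ a := hoff 0 1 (by decide)
    have hb : 0 ≤ b := hoff 1 0 (by decide)
    have h00 : Q 0 0 = -a := by have := hrowQ 0; rw [Fin.sum_univ_two] at this; linarith
    have h11 : Q 1 1 = -b := by have := hrowQ 1; rw [Fin.sum_univ_two] at this; linarith
    have hQ : Q = Nmat a b := by
      ext i j
      fin_cases i <;> fin_cases j <;> simp [Nmat, h00, h11, hadef, hbdef]
    by_cases hs : a + b = 0
    · have ha0 : a = 0 := by linarith
      have hb0 : b = 0 := by linarith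
      have : Q = 0 := by
        rw [hQ, ha0, hb0]
        ext i j
        fin_cases i <;> fin_cases j <;> simp [Nmat]
      rw [this, exp_zero] at hexp
      rw [← hexp]
      simp
    · have hexp' : P = 1 + ((1 - Real.exp (-(1 * (a + b)))) / (a + b)) • Nmat a b := by
        rw [← hexp, hQ, ← exp_Nmat a b 1 hs, one_smul]
      set f := (1 - Real.exp (-(1 * (a + b)))) / (a + b) with hfdef
      have hfs : f * (a + b) = 1 - Real.exp (-(1 * (a + b))) := by
        rw [hfdef, div_mul_cancel₀ _ hs]
      have hdet : P.det = Real.exp (-(1 * (a + b))) := by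
        rw [hexp', Matrix.det_fin_two]
        have hE : Real.exp (-(1 * (a + b))) = 1 - f * (a + b) := by linarith
        rw [hE]
        simp [Nmat, Matrix.one_apply]
        ring
      rw [hdet]
      exact Real.exp_pos _
  · intro hdet
    set a := P 0 1 with hadef
    set b := P 1 0 with hbdef
    have ha : 0 < a := hpos 0 1
    have hb : 0 < b := hpos 1 0
    have h00 : P 0 0 = 1 - a := by have := hrow 0; rw [Fin.sum_univ_two] at this; linarith
    have h11 : P 1 1 = 1 - b := by have := hrow 1; rw [Fin.sum_univ_two] at this; linarith
    have hdet' : P.det = 1 - (a + b) := by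
      rw [Matrix.det_fin_two, h00, h11]
      ring
    rw [hdet'] at hdet
    have hs : (0:ℝ) < a + b := by linarith
    have hsne : a + b ≠ 0 := ne_of_gt hs
    have hlog : Real.log (1 - (a + b)) < 0 := Real.log_neg hdet (by linarith)
    set t := -Real.log (1 - (a + b)) / (a + b) with htdef
    have ht : 0 ≤ t := div_nonneg (by linarith) (le_of_lt hs)
    refine ⟨t • Nmat a b, ?_, ?_, ?_⟩
    · intro i j hij
      fin_cases i <;> fin_cases j <;>
        first
          | exact absurd rfl hij
          | (simp [Nmat]; positivity)
    · intro i
      fin_cases i <;> simp [Nmat, Fin.sum_univ_two]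
    · rw [exp_Nmat a b t hsne]
      have hts : -(t * (a + b)) = Real.log (1 - (a + b)) := by
        rw [htdef]
        field_simp
      rw [hts, Real.exp_log hdet]
      have hcoef : (1 - (1 - (a + b))) / (a + b) = 1 := by
        field_simp
        ring
      rw [hcoef, one_smul]
      ext i j
      fin_cases i <;> fin_cases j <;>
        simp [Nmat, Matrix.one_apply, h00, h11] <;> ring
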